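/- The coefficients of the formal power series (-3q;q)_∞ (q;q^2)_∞ are congruent modulo 4 to those of 1 + 2∑_{n≥1} q^{n^2}: the coefficient of q^n (n ≥ 1) is ≡ 2 (mod 4) if n is a square and ≡ 0 (mod 4) otherwise. -/

import Mathlib

variable {R : Type*} [CommRing R] (t : R)

/-- Gaussian binomial coefficient in variable `t`, via the `q`-Pascal recursion. -/
def qb : ℕ → ℕ → R
  | 0, 0 => 1
  | 0, _+1 => 0
  | _+1, 0 => 1
  | n+1, k+1 => qb n k + t^(k+1) * qb n (k+1)

@[simp] lemma qb_zero_right (n : ℕ) : qb t n 0 = 1 := by cases n <;> rfl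

@[simp] lemma qb_zero_succ (k : ℕ) : qb t 0 (k+1) = 0 := rfl

lemma qb_succ_succ (n k : ℕ) :
    qb t (n+1) (k+1) = qb t n k + t^(k+1) * qb t n (k+1) := rfl

lemma qb_eq_zero : ∀ n k : ℕ, n < k → qb t n k = 0 := by
  intro n
  induction n with
  | zero => intro k hk; match k, hk with | k+1, _ => rfl
  | succ n ih =>
    intro k hk
    match k, hk with
    | k+1, hk =>
      rw [qb_succ_succ, ih k (by omega), ih (k+1) (by omega)]
      ring

@[simp] lemma qb_self : ∀ n : ℕ, qb t n n = 1 := by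
  intro n
  induction n with
  | zero => rfl
  | succ n ih => rw [qb_succ_succ, ih, qb_eq_zero t n (n+1) (by omega)]; ring

lemma qb_one_succ : ∀ n : ℕ, qb t (n+1) 1 = qb t n 1 + t^n := by
  intro n
  induction n with
  | zero => show qb t 0 0 + t^1 * qb t 0 1 = qb t 0 1 + t^0; simp
  | succ n ih =>
    have h1 : qb t (n+2) 1 = 1 + t^1 * qb t (n+1) 1 := by
      rw [qb_succ_succ, qb_zero_right]
    have h2 : qb t (n+1) 1 = 1 + t^1 * qb t n 1 := by
      rw [qb_succ_succ, qb_zero_right]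
    rw [h1, h2]
    linear_combination t * (h2.symm.trans ih)

lemma qb_pascal2 : ∀ n k : ℕ, qb t (n+1) (k+1) = qb t n (k+1) + t^(n-k) * qb t n k := by
  intro n
  induction n with
  | zero =>
    intro k
    cases k with
    | zero => show qb t 0 0 + t^1 * qb t 0 1 = qb t 0 1 + t^0 * qb t 0 0; simp
    | succ k =>
      rw [qb_succ_succ]
      simp [qb_eq_zero t 0 (k+1) (by omega)]
  | succ n ih =>
    intro k
    cases k with
    | zero =>
      simpa using qb_one_succ t (n+1)
    | succ k =>
      calc qb t (n+2) (k+2)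
          = qb t (n+1) (k+1) + t^(k+2) * qb t (n+1) (k+2) := rfl
        _ = (qb t n (k+1) + t^(n-k) * qb t n k)
            + t^(k+2) * (qb t n (k+2) + t^(n-(k+1)) * qb t n (k+1)) := by
            rw [ih k, ih (k+1)]
        _ = qb t (n+1) (k+2) + t^(n+1-(k+1)) * qb t (n+1) (k+1) := by
            rw [qb_succ_succ t n (k+1), qb_succ_succ t n k,
              show n+1-(k+1) = n-k by omega]
            rcases le_or_gt (k+1) n with h | h
            · have hp : t^(k+2) * t^(n-(k+1)) = t^(n-k) * t^(k+1) := by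
                rw [← pow_add, ← pow_add]; congr 1 <;> omega
              linear_combination qb t n (k+1) * hp
            · rw [qb_eq_zero t n (k+1) h]; ring

/-- Double Pascal step used in the Jacobi triple product induction. -/
lemma qb_double (m i : ℕ) (hi : 2 ≤ i) :
    qb t (2*m+2) i = t^i * qb t (2*m) i + t^(2*m+2-i) * qb t (2*m) (i-2)
      + (1 + t^(2*m+1)) * qb t (2*m) (i-1) := by
  obtain ⟨k, rfl⟩ : ∃ k, i = k + 2 := ⟨i - 2, by omega⟩
  have h1 : qb t (2*m+2) (k+2) = qb t (2*m+1) (k+1) + t^(k+2) * qb t (2*m+1) (k+2) := rfl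
  have h2 : qb t (2*m+1) (k+1) = qb t (2*m) (k+1) + t^(2*m-k) * qb t (2*m) k :=
    qb_pascal2 t (2*m) k
  have h3 : qb t (2*m+1) (k+2) = qb t (2*m) (k+2) + t^(2*m-(k+1)) * qb t (2*m) (k+1) :=
    qb_pascal2 t (2*m) (k+1)
  rw [h1, h2, h3, show k+2-2 = k by omega, show k+2-1 = k+1 by omega,
    show 2*m+2-(k+2) = 2*m-k by omega]
  rcases le_or_gt (k+1) (2*m) with h | h
  · have hp : t^(k+2) * t^(2*m-(k+1)) = t^(2*m+1) := by
      rw [← pow_add]; congr 1 <;> omega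
    linear_combination qb t (2*m) (k+1) * hp
  · rw [qb_eq_zero t (2*m) (k+1) h]; ring

/-- Product formula, low side: `qb t m k * (t;t)_k = ∏_{j<k} (1 - t^(m-k+j+1))`. -/
lemma qb_prod_low : ∀ m k : ℕ, k ≤ m →
    qb t m k * ∏ j ∈ Finset.range k, (1 - t^(j+1))
      = ∏ j ∈ Finset.range k, (1 - t^(m-k+j+1)) := by
  intro m
  induction m with
  | zero => intro k hk; interval_cases k; simp
  | succ m ih =>
    intro k hk
    cases k with
    | zero => simp
    | succ k =>
      rw [qb_succ_succ, Finset.prod_range_succ _ k]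
      rcases le_or_gt (k+1) m with h | h
      · have i1 := ih k (by omega)
        have i2 := ih (k+1) h
        have e1 : ∀ j, m+1-(k+1)+j+1 = m-k+j+1 := fun j => by omega
        simp only [e1]
        have r2 : ∏ j ∈ Finset.range (k+1), (1 - t^(m-(k+1)+j+1))
            = (1 - t^(m-k)) * ∏ j ∈ Finset.range k, (1 - t^(m-k+j+1)) := by
          rw [Finset.prod_range_succ']
          have e2 : ∀ j, m-(k+1)+(j+1)+1 = m-k+j+1 := fun j => by omega
          have e3 : m-(k+1)+0+1 = m-k := by omega
          simp only [e2, e3]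
          ring
        have hp : t^(k+1) * t^(m-k) = t^(m+1) := by rw [← pow_add]; congr 1 <;> omega
        -- goal: (qb m k + t^(k+1) qb m (k+1)) * (Bk * (1-t^(k+1))) = ∏_{j<k+1}(1-t^(m-k+j+1))
        rw [Finset.prod_range_succ _ k, show m-k+k+1 = m+1 by omega]
        calc (qb t m k + t^(k+1) * qb t m (k+1))
              * ((∏ j ∈ Finset.range k, (1 - t^(j+1))) * (1 - t^(k+1)))
            = (qb t m k * ∏ j ∈ Finset.range k, (1 - t^(j+1))) * (1 - t^(k+1))
              + t^(k+1) * (qb t m (k+1) * ∏ j ∈ Finset.range (k+1), (1 - t^(j+1))) := by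
              rw [Finset.prod_range_succ _ k]; ring
          _ = (∏ j ∈ Finset.range k, (1 - t^(m-k+j+1))) * (1 - t^(k+1))
              + t^(k+1) * ∏ j ∈ Finset.range (k+1), (1 - t^(m-(k+1)+j+1)) := by
              rw [i1, i2]
          _ = (∏ j ∈ Finset.range k, (1 - t^(m-k+j+1))) * (1 - t^(m+1)) := by
              rw [r2]; linear_combination
                (-(∏ j ∈ Finset.range k, (1 - t^(m-k+j+1)))) * hp
      · -- k = m here
        have hk' : k = m := by omega
        subst hk'
        rw [qb_self, qb_eq_zero t k (k+1) (by omega)]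
        have e1 : ∀ j, k+1-(k+1)+j+1 = j+1 := fun j => by omega
        simp only [e1]
        rw [Finset.prod_range_succ _ k]
        ring

/-- Product formula, high side: `qb t m k * (t;t)_{m-k} = ∏_{j<m-k} (1 - t^(k+1+j))`. -/
lemma qb_prod_high : ∀ m k : ℕ, k ≤ m →
    qb t m k * ∏ j ∈ Finset.range (m-k), (1 - t^(j+1))
      = ∏ j ∈ Finset.range (m-k), (1 - t^(k+1+j)) := by
  intro m
  induction m with
  | zero => intro k hk; interval_cases k; simp
  | succ m ih =>
    intro k hk
    cases k with
    | zero =>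
      simp only [qb_zero_right, Nat.sub_zero, one_mul, Nat.zero_add]
      exact Finset.prod_congr rfl fun j _ => by rw [Nat.add_comm 1 j]
    | succ k =>
      rcases le_or_gt (k+1) m with h | h
      · have hd : m+1-(k+1) = (m-k-1)+1 := by omega
        have hd2 : m-(k+1) = m-k-1 := by omega
        have i1 := ih k (by omega)
        have i2 := ih (k+1) h
        rw [hd2] at i2
        have hd3 : m-k = (m-k-1)+1 := by omega
        rw [hd3] at i1
        have hp : t^(k+1) * t^((m-k-1)+1) = t^(m+1) := by rw [← pow_add]; congr 1 <;> omega
        rw [qb_succ_succ, hd]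
        have s1 : ∏ j ∈ Finset.range ((m-k-1)+1), (1 - t^(j+1))
            = (∏ j ∈ Finset.range (m-k-1), (1 - t^(j+1))) * (1 - t^((m-k-1)+1)) :=
          Finset.prod_range_succ _ _
        have s2 : ∏ j ∈ Finset.range ((m-k-1)+1), (1 - t^(k+1+j))
            = (∏ j ∈ Finset.range (m-k-1), (1 - t^(k+1+1+j))) * (1 - t^(k+1)) := by
          rw [Finset.prod_range_succ', Nat.add_zero]
          congr 1
          exact Finset.prod_congr rfl fun j _ => by
            rw [show k+1+(j+1) = k+1+1+j by omega]
        have s3 : ∏ j ∈ Finset.range ((m-k-1)+1), (1 - t^(k+1+1+j))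
            = (∏ j ∈ Finset.range (m-k-1), (1 - t^(k+1+1+j))) * (1 - t^(m+1)) := by
          rw [Finset.prod_range_succ, show k+1+1+(m-k-1) = m+1 by omega]
        linear_combination i1 + (t^(k+1) * qb t m (k+1)) * s1
          + (t^(k+1)*(1 - t^((m-k-1)+1))) * i2 + s2
          + (-(∏ j ∈ Finset.range (m-k-1), (1 - t^(k+1+1+j)))) * hp + (-1 : R) * s3
      · have hk' : k = m := by omega
        subst hk'
        rw [Nat.sub_self, Finset.prod_range_zero, Finset.prod_range_zero, qb_self, mul_one]

/-! ### The coefficient family for the Jacobi triple product -/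

/-- `ee m i = (m-i)^2` computed symmetrically in `ℕ`. -/
def ee (m i : ℕ) : ℕ := (m-i)^2 + (i-m)^2

lemma ee_left {m i : ℕ} (h : i ≤ m) : ee m i = (m-i)^2 := by
  unfold ee; rw [show i - m = 0 by omega]; ring

lemma ee_right {m i : ℕ} (h : m ≤ i) : ee m i = (i-m)^2 := by
  unfold ee; rw [show m - i = 0 by omega]; ring

lemma eeA (m i : ℕ) : ee (m+1) i + 2*i = 2*m+1 + ee m i := by
  unfold ee
  rcases le_total i m with h | h
  · obtain ⟨d, rfl⟩ : ∃ d, m = i + d := ⟨m-i, by omega⟩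
    rw [show i+d-i = d by omega, show i+d+1-i = d+1 by omega,
      show i-(i+d) = 0 by omega, show i-(i+d+1) = 0 by omega]
    ring
  · obtain ⟨d, rfl⟩ : ∃ d, i = m + d := ⟨i-m, by omega⟩
    rcases d with _ | d
    · rw [show m+0 = m by omega, show m-m = 0 by omega, show m+1-m = 1 by omega,
        show m-(m+1) = 0 by omega]
      ring
    · rw [show m+1-(m+(d+1)) = 0 by omega, show m+(d+1)-(m+1) = d by omega,
        show m-(m+(d+1)) = 0 by omega, show m+(d+1)-m = d+1 by omega]
      ring

lemma eeB (m i : ℕ) (h2 : 2 ≤ i) (h : i ≤ 2*m+2) :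
    ee (m+1) i + 2*(2*m+2-i) = 2*m+1 + ee m (i-2) := by
  unfold ee
  rcases le_total i (m+1) with hc | hc
  · obtain ⟨j, rfl⟩ : ∃ j, i = j + 2 := ⟨i-2, by omega⟩
    obtain ⟨d, rfl⟩ : ∃ d, m = j + 1 + d := ⟨m-j-1, by omega⟩
    rw [show j+1+d+1-(j+2) = d by omega, show j+2-(j+1+d+1) = 0 by omega,
      show 2*(j+1+d)+2-(j+2) = j+2*d+2 by omega, show j+2-2 = j by omega,
      show j+1+d-j = d+1 by omega, show j-(j+1+d) = 0 by omega]
    ring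
  · obtain ⟨d, rfl⟩ : ∃ d, i = m+1+d := ⟨i-(m+1), by omega⟩
    rcases d with _ | d
    · rw [show m+1+0 = m+1 by omega, show m+1-(m+1) = 0 by omega,
        show 2*m+2-(m+1) = m+1 by omega, show m+1-2 = m-1 by omega,
        show m-(m-1) = 1 by omega, show m-1-m = 0 by omega]
      ring
    · obtain ⟨u, rfl⟩ : ∃ u, m = d + u := ⟨m-d, by omega⟩
      rw [show d+u+1-(d+u+1+(d+1)) = 0 by omega,
        show d+u+1+(d+1)-(d+u+1) = d+1 by omega,
        show 2*(d+u)+2-(d+u+1+(d+1)) = u by omega,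
        show d+u+1+(d+1)-2 = 2*d+u by omega,
        show d+u-(2*d+u) = 0 by omega,
        show 2*d+u-(d+u) = d by omega]
      ring

lemma eeC (m i : ℕ) (h : 1 ≤ i) : ee (m+1) i = ee m (i-1) := by
  unfold ee
  rw [show m+1-i = m-(i-1) by omega, show i-(m+1) = i-1-m by omega]

open Polynomial in
/-- `ℕ`-level form of the coefficient recursion. -/
lemma star_nat (m iN : ℕ) (h2 : 2 ≤ iN) :
    (X:Polynomial ℤ)^(ee (m+1) iN) * qb ((X:Polynomial ℤ)^2) (2*m+2) iN
      = X^(2*m+1) * (X^(ee m iN) * qb ((X:Polynomial ℤ)^2) (2*m) iN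
          + X^(ee m (iN-2)) * qb ((X:Polynomial ℤ)^2) (2*m) (iN-2))
        + (1 + X^(4*m+2)) * (X^(ee m (iN-1)) * qb ((X:Polynomial ℤ)^2) (2*m) (iN-1)) := by
  rw [qb_double _ m iN h2]
  have h1 : (X:Polynomial ℤ)^(ee (m+1) iN) * ((X^2)^iN) = X^(2*m+1) * X^(ee m iN) := by
    rw [← pow_mul, ← pow_add, ← pow_add]; congr 1; have := eeA m iN; omega
  have h3' : (X:Polynomial ℤ)^(ee (m+1) iN) = X^(ee m (iN-1)) := by
    rw [eeC m iN (by omega)]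
  have h4 : ((X:Polynomial ℤ)^2)^(2*m+1) = X^(4*m+2) := by
    rw [← pow_mul]; congr 1 <;> omega
  rcases le_or_gt iN (2*m+2) with h | h
  · have h2' : (X:Polynomial ℤ)^(ee (m+1) iN) * ((X^2)^(2*m+2-iN))
        = X^(2*m+1) * X^(ee m (iN-2)) := by
      rw [← pow_mul, ← pow_add, ← pow_add]; congr 1
      have := eeB m iN h2 h; omega
    linear_combination (qb ((X:Polynomial ℤ)^2) (2*m) iN) * h1
      + (qb ((X:Polynomial ℤ)^2) (2*m) (iN-2)) * h2'
      + ((1 + (X:Polynomial ℤ)^(4*m+2)) * qb ((X:Polynomial ℤ)^2) (2*m) (iN-1)) * h3'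
      + ((qb ((X:Polynomial ℤ)^2) (2*m) (iN-1)) * (X:Polynomial ℤ)^(ee (m+1) iN)) * h4
  · rw [qb_eq_zero _ (2*m) (iN-2) (by omega)]
    linear_combination (qb ((X:Polynomial ℤ)^2) (2*m) iN) * h1
      + ((1 + (X:Polynomial ℤ)^(4*m+2)) * qb ((X:Polynomial ℤ)^2) (2*m) (iN-1)) * h3'
      + ((qb ((X:Polynomial ℤ)^2) (2*m) (iN-1)) * (X:Polynomial ℤ)^(ee (m+1) iN)) * h4

open Polynomial in
/-- The `i`-th coefficient (shifted to `ℤ`-indexing) of the truncated triple product. -/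
noncomputable def cc (m : ℕ) (i : ℤ) : Polynomial ℤ :=
  if 0 ≤ i then X ^ (ee m i.toNat) * qb ((X:Polynomial ℤ)^2) (2*m) i.toNat else 0

lemma cc_neg {m : ℕ} {i : ℤ} (h : i < 0) : cc m i = 0 := if_neg (by omega)

open Polynomial in
lemma cc_coe (m iN : ℕ) :
    cc m (iN : ℤ) = X ^ (ee m iN) * qb ((X:Polynomial ℤ)^2) (2*m) iN := by
  rw [cc, if_pos (by positivity)]
  norm_num

lemma cc_big {m : ℕ} {i : ℤ} (h : 2*m < i) : cc m i = 0 := by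
  rw [cc, if_pos (by omega), qb_eq_zero _ _ _ (by omega), mul_zero]

open Polynomial in
lemma cc_rec (m : ℕ) (i : ℤ) :
    cc (m+1) i = X^(2*m+1) * (cc m i + cc m (i-2)) + (1 + X^(4*m+2)) * cc m (i-1) := by
  rcases lt_or_ge i 0 with h | h
  · rw [cc_neg h, cc_neg (by omega : i - 2 < 0), cc_neg (by omega : i - 1 < 0), cc_neg h]
    ring
  obtain ⟨iN, rfl⟩ : ∃ iN : ℕ, i = (iN : ℤ) := ⟨i.toNat, by omega⟩
  match iN with
  | 0 =>
    rw [show ((0:ℕ):ℤ) - 2 = -2 by norm_num, show ((0:ℕ):ℤ) - 1 = -1 by norm_num,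
      cc_neg (by norm_num : (-2:ℤ) < 0), cc_neg (by norm_num : (-1:ℤ) < 0),
      cc_coe, cc_coe, qb_zero_right, qb_zero_right, ee_left (by omega),
      ee_left (by omega)]
    simp only [Nat.sub_zero, mul_one, mul_zero, add_zero]
    rw [show (m+1)^2 = (2*m+1) + m^2 by ring, pow_add]
  | 1 =>
    rw [show ((1:ℕ):ℤ) - 2 = -1 by norm_num, show ((1:ℕ):ℤ) - 1 = ((0:ℕ):ℤ) by norm_num,
      cc_neg (by norm_num : (-1:ℤ) < 0), cc_coe, cc_coe, cc_coe]
    rw [qb_zero_right, add_zero, mul_one]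
    -- qb (X^2) (2m+2) 1 = (X^2) * qb (X^2) (2m) 1 + 1 + (X^2)^(2m+1)
    have hq : qb ((X:Polynomial ℤ)^2) (2*m+2) 1
        = (X:Polynomial ℤ)^2 * qb ((X:Polynomial ℤ)^2) (2*m) 1 + 1 + ((X:Polynomial ℤ)^2)^(2*m+1) := by
      have e1 : (2*m+1)+1 = 2*m+2 := by omega
      have := qb_one_succ ((X:Polynomial ℤ)^2) (2*m+1)
      rw [e1] at this
      rw [this, qb_succ_succ]
      rw [qb_zero_right]
      ring
    rw [show 2*(m+1) = 2*m+2 by omega, hq]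
    have hE : ee (m+1) 1 + 2 = (2*m+1) + ee m 1 := by have := eeA m 1; omega
    have hx : (X:Polynomial ℤ)^(ee (m+1) 1) * (X:Polynomial ℤ)^2
        = X^(2*m+1) * X^(ee m 1) := by
      rw [← pow_add, ← pow_add]; congr 1 <;> omega
    have hy : ((X:Polynomial ℤ)^2)^(2*m+1) = X^(4*m+2) := by
      rw [← pow_mul]; congr 1 <;> omega
    have hz : ee (m+1) 1 = m^2 := by
      rw [ee_left (by omega)]; congr 1 <;> omega
    have hw : ee m 0 = m^2 := by rw [ee_left (by omega)]; congr 1 <;> omega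
    rw [hz] at hx ⊢
    rw [hw]
    linear_combination (qb ((X:Polynomial ℤ)^2) (2*m) 1) * hx + ((X:Polynomial ℤ)^(m^2)) * hy
  | (k+2) =>
    have e2 : ((k+2:ℕ):ℤ) - 2 = ((k:ℕ):ℤ) := by push_cast; ring
    have e1 : ((k+2:ℕ):ℤ) - 1 = ((k+1:ℕ):ℤ) := by push_cast; ring
    rw [e1, e2, cc_coe, cc_coe, cc_coe, cc_coe]
    have := star_nat m (k+2) (by omega)
    rw [show k+2-2 = k by omega, show k+2-1 = k+1 by omega] at this
    rw [show 2*(m+1) = 2*m+2 by omega]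
    exact this

open Polynomial Finset in
/-- Alternating sum of the coefficients. -/
noncomputable def TT (m : ℕ) : Polynomial ℤ :=
  ∑ i ∈ Finset.range (2*m+1), (-1:Polynomial ℤ)^i * cc m (i : ℤ)

open Polynomial Finset in
lemma TT_succ (m : ℕ) : TT (m+1) = -((1 - X^(2*m+1))^2) * TT m := by
  have key : TT (m+1)
      = ∑ i ∈ Finset.range (2*m+3), (-1:Polynomial ℤ)^i *
          (X^(2*m+1) * (cc m (i:ℤ) + cc m ((i:ℤ)-2)) + (1 + X^(4*m+2)) * cc m ((i:ℤ)-1)) := by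
    rw [TT, show 2*(m+1)+1 = 2*m+3 by omega]
    exact Finset.sum_congr rfl fun i _ => by rw [cc_rec]
  rw [key]
  have split : ∀ i : ℕ, (-1:Polynomial ℤ)^i *
      (X^(2*m+1) * (cc m (i:ℤ) + cc m ((i:ℤ)-2)) + (1 + X^(4*m+2)) * cc m ((i:ℤ)-1))
      = X^(2*m+1) * ((-1:Polynomial ℤ)^i * cc m (i:ℤ))
        + X^(2*m+1) * ((-1:Polynomial ℤ)^i * cc m ((i:ℤ)-2))
        + (1 + X^(4*m+2)) * ((-1:Polynomial ℤ)^i * cc m ((i:ℤ)-1)) := fun i => by ring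
  simp only [split]
  rw [Finset.sum_add_distrib, Finset.sum_add_distrib]
  have S1 : ∑ i ∈ Finset.range (2*m+3), X^(2*m+1) * ((-1:Polynomial ℤ)^i * cc m (i:ℤ))
      = X^(2*m+1) * TT m := by
    rw [show (2*m+3) = (2*m+2)+1 by omega, Finset.sum_range_succ,
      Finset.sum_range_succ, cc_big (by push_cast; omega), cc_big (by push_cast; omega)]
    rw [TT, Finset.mul_sum]
    simp
  have S2 : ∑ i ∈ Finset.range (2*m+3), X^(2*m+1) * ((-1:Polynomial ℤ)^i * cc m ((i:ℤ)-2))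
      = X^(2*m+1) * TT m := by
    rw [show (2*m+3) = (2*m+2)+1 by omega, Finset.sum_range_succ',
      show (2*m+2) = (2*m+1)+1 by omega, Finset.sum_range_succ']
    have hmain : ∀ i ∈ Finset.range (2*m+1),
        X^(2*m+1) * ((-1:Polynomial ℤ)^(i+1+1) * cc m ((((i+1+1:ℕ)):ℤ)-2))
        = X^(2*m+1) * ((-1:Polynomial ℤ)^i * cc m (i:ℤ)) := by
      intro i _
      rw [show (((i+1+1:ℕ)):ℤ)-2 = (i:ℤ) by push_cast; ring, pow_add]
      ring
    rw [Finset.sum_congr rfl hmain]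
    rw [show (((0+1:ℕ)):ℤ)-2 = -1 by norm_num, show (((0:ℕ)):ℤ)-2 = -2 by norm_num,
      cc_neg (by norm_num), cc_neg (by norm_num), TT, Finset.mul_sum]
    simp
  have S3 : ∑ i ∈ Finset.range (2*m+3), (1 + X^(4*m+2)) * ((-1:Polynomial ℤ)^i * cc m ((i:ℤ)-1))
      = -((1 + X^(4*m+2)) * TT m) := by
    rw [show (2*m+3) = (2*m+2)+1 by omega, Finset.sum_range_succ']
    have hmain : ∀ i ∈ Finset.range (2*m+2),
        (1 + X^(4*m+2)) * ((-1:Polynomial ℤ)^(i+1) * cc m ((((i+1:ℕ)):ℤ)-1))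
        = -((1 + X^(4*m+2)) * ((-1:Polynomial ℤ)^i * cc m (i:ℤ))) := by
      intro i _
      rw [show (((i+1:ℕ)):ℤ)-1 = (i:ℤ) by push_cast; ring, pow_add]
      ring
    rw [Finset.sum_congr rfl hmain]
    rw [show (2*m+2) = (2*m+1)+1 by omega, Finset.sum_range_succ,
      cc_big (by push_cast; omega),
      show (((0:ℕ)):ℤ)-1 = -1 by norm_num, cc_neg (by norm_num), TT, Finset.mul_sum,
      Finset.sum_neg_distrib]
    simp
  rw [S1, S2, S3]
  ring

open Polynomial Finset in
lemma prod_sq (m : ℕ) :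
    (∏ j ∈ Finset.range m, (1 - (X:Polynomial ℤ)^(2*j+1)))^2 = (-1)^m * TT m := by
  induction m with
  | zero =>
    rw [TT]
    simp [cc_coe, ee]
  | succ m ih =>
    rw [Finset.prod_range_succ, mul_pow, ih, TT_succ]
    ring

open Polynomial in
lemma coeff_mul_prod_one_sub (s : Finset ℕ) (f : ℕ → ℕ) (p : Polynomial ℤ) (d : ℕ)
    (h : ∀ j ∈ s, d < f j) :
    (p * ∏ j ∈ s, (1 - (X:Polynomial ℤ)^(f j))).coeff d = p.coeff d := by
  induction s using Finset.induction_on generalizing p with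
  | empty => simp
  | @insert a s ha ih =>
    rw [Finset.prod_insert ha, show p * ((1 - (X:Polynomial ℤ)^(f a)) * ∏ j ∈ s, (1 - (X:Polynomial ℤ)^(f j)))
      = (p * (1 - X^(f a))) * ∏ j ∈ s, (1 - (X:Polynomial ℤ)^(f j)) by ring]
    rw [ih _ (fun j hj => h j (Finset.mem_insert_of_mem hj))]
    rw [mul_sub, mul_one, Polynomial.coeff_sub, Polynomial.coeff_mul_X_pow',
      if_neg (not_le.mpr (h a (Finset.mem_insert_self a s))), sub_zero]

lemma sub_sq_bound (i d : ℕ) : i + d - d^2 < 2*i + 2 := by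
  have h2 : d ≤ d^2 := Nat.le_self_pow two_ne_zero d
  generalize d^2 = b at h2 ⊢
  omega

open Polynomial Finset in
lemma term_coeff (n i : ℕ) (hi : i ≤ 2*n) :
    (cc n (i:ℤ) * ∏ j ∈ Finset.range n, (1 - (X:Polynomial ℤ)^(2*j+2))).coeff n
      = if ee n i = n then 1 else 0 := by
  rw [cc_coe]
  rcases le_total i n with hA | hB
  · -- low case : use qb_prod_low
    have hsplit : (∏ j ∈ Finset.range n, (1 - (X:Polynomial ℤ)^(2*j+2)))
        = (∏ j ∈ Finset.range i, (1 - ((X:Polynomial ℤ)^2)^(j+1)))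
          * ∏ j ∈ Finset.range (n-i), (1 - (X:Polynomial ℤ)^(2*(i+j+1))) := by
      conv_lhs => rw [show n = i + (n-i) by omega]
      rw [Finset.prod_range_add]
      congr 1
      all_goals first
        | exact Finset.prod_congr rfl fun j _ => by rw [← pow_mul, show 2*(j+1) = 2*j+2 by omega]
        | exact Finset.prod_congr rfl fun j _ => by rw [show 2*(i+j)+2 = 2*(i+j+1) by omega]
    have hqb := qb_prod_low ((X:Polynomial ℤ)^2) (2*n) i (by omega)
    have hconv : ∏ j ∈ Finset.range i, (1 - ((X:Polynomial ℤ)^2)^(2*n-i+j+1))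
        = ∏ j ∈ Finset.range i, (1 - (X:Polynomial ℤ)^(2*(2*n-i+j+1))) :=
      Finset.prod_congr rfl fun j _ => by rw [← pow_mul]
    have hexp : X^(ee n i) * qb ((X:Polynomial ℤ)^2) (2*n) i
          * (∏ j ∈ Finset.range n, (1 - (X:Polynomial ℤ)^(2*j+2)))
        = ((1 * ∏ j ∈ Finset.range i, (1 - (X:Polynomial ℤ)^(2*(2*n-i+j+1))))
            * ∏ j ∈ Finset.range (n-i), (1 - (X:Polynomial ℤ)^(2*(i+j+1)))) * X^(ee n i) := by
      rw [hsplit, ← hconv, ← hqb]; ring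
    rw [hexp, Polynomial.coeff_mul_X_pow']
    rcases le_or_gt (ee n i) n with he | he
    · rw [if_pos he]
      rw [coeff_mul_prod_one_sub _ _ _ _ (fun j _ => by
        rw [ee_left hA]
        have h1 := sub_sq_bound i (n-i)
        have h2 : i + (n-i) = n := by omega
        generalize (n-i)^2 = b at h1 ⊢
        omega)]
      rw [coeff_mul_prod_one_sub _ _ _ _ (fun j _ => by
        have : n - ee n i ≤ n := Nat.sub_le _ _
        omega)]
      rw [Polynomial.coeff_one]
      split_ifs with h1 h2 <;> first | rfl | omega
    · rw [if_neg (by omega), if_neg (by omega)]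
  · -- high case : use qb_prod_high
    have hsplit : (∏ j ∈ Finset.range n, (1 - (X:Polynomial ℤ)^(2*j+2)))
        = (∏ j ∈ Finset.range (2*n-i), (1 - ((X:Polynomial ℤ)^2)^(j+1)))
          * ∏ j ∈ Finset.range (i-n), (1 - (X:Polynomial ℤ)^(2*((2*n-i)+j+1))) := by
      conv_lhs => rw [show n = (2*n-i) + (i-n) by omega]
      rw [Finset.prod_range_add]
      congr 1
      all_goals first
        | exact Finset.prod_congr rfl fun j _ => by rw [← pow_mul, show 2*(j+1) = 2*j+2 by omega]
        | exact Finset.prod_congr rfl fun j _ => by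
            rw [show 2*((2*n-i)+j)+2 = 2*((2*n-i)+j+1) by omega]
    have hqb := qb_prod_high ((X:Polynomial ℤ)^2) (2*n) i hi
    have hconv : ∏ j ∈ Finset.range (2*n-i), (1 - ((X:Polynomial ℤ)^2)^(i+1+j))
        = ∏ j ∈ Finset.range (2*n-i), (1 - (X:Polynomial ℤ)^(2*(i+1+j))) :=
      Finset.prod_congr rfl fun j _ => by rw [← pow_mul]
    have hexp : X^(ee n i) * qb ((X:Polynomial ℤ)^2) (2*n) i
          * (∏ j ∈ Finset.range n, (1 - (X:Polynomial ℤ)^(2*j+2)))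
        = ((1 * ∏ j ∈ Finset.range (2*n-i), (1 - (X:Polynomial ℤ)^(2*(i+1+j))))
            * ∏ j ∈ Finset.range (i-n), (1 - (X:Polynomial ℤ)^(2*((2*n-i)+j+1)))) * X^(ee n i) := by
      rw [hsplit, ← hconv, ← hqb]; ring
    rw [hexp, Polynomial.coeff_mul_X_pow']
    rcases le_or_gt (ee n i) n with he | he
    · rw [if_pos he]
      rw [coeff_mul_prod_one_sub _ _ _ _ (fun j _ => by
        rw [ee_right hB]
        have h1 := sub_sq_bound (n-(i-n)) (i-n)
        have h2 : (n-(i-n)) + (i-n) = n := by omega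
        have h3 : 2*n-i = n-(i-n) := by omega
        generalize (i-n)^2 = b at h1 ⊢
        omega)]
      rw [coeff_mul_prod_one_sub _ _ _ _ (fun j _ => by
        have : n - ee n i ≤ n := Nat.sub_le _ _
        omega)]
      rw [Polynomial.coeff_one]
      split_ifs with h1 h2 <;> first | rfl | omega
    · rw [if_neg (by omega), if_neg (by omega)]

lemma neg_one_pow_eq (a b : ℕ) (h : a % 2 = b % 2) : (-1:ℤ)^a = (-1:ℤ)^b := by
  conv_lhs => rw [← Nat.div_add_mod a 2]
  conv_rhs => rw [← Nat.div_add_mod b 2]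
  rw [pow_add, pow_add, pow_mul, pow_mul, h]
  norm_num

open Polynomial Finset in
lemma key_coeff (n : ℕ) :
    ((∏ j ∈ Finset.range n, (1 - (X:Polynomial ℤ)^(2*j+1)))^2
      * ∏ j ∈ Finset.range n, (1 - (X:Polynomial ℤ)^(2*j+2))).coeff n
    = ∑ i ∈ Finset.range (2*n+1), (-1:ℤ)^(n+i) * (if ee n i = n then 1 else 0) := by
  rw [prod_sq, TT]
  have h1 : (((-1:Polynomial ℤ))^n * ∑ i ∈ Finset.range (2*n+1), (-1:Polynomial ℤ)^i * cc n (i:ℤ))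
        * ∏ j ∈ Finset.range n, (1 - (X:Polynomial ℤ)^(2*j+2))
      = ∑ i ∈ Finset.range (2*n+1), (Polynomial.C ((-1:ℤ)^(n+i)))
        * (cc n (i:ℤ) * ∏ j ∈ Finset.range n, (1 - (X:Polynomial ℤ)^(2*j+2))) := by
    rw [Finset.mul_sum, Finset.sum_mul]
    refine Finset.sum_congr rfl fun i _ => ?_
    have hC : (Polynomial.C ((-1:ℤ)^(n+i))) = (-1:Polynomial ℤ)^(n+i) := by
      rw [map_pow, map_neg, map_one]
    rw [hC, pow_add]
    ring
  rw [h1, Polynomial.finset_sum_coeff]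
  refine Finset.sum_congr rfl fun i hi => ?_
  rw [Polynomial.coeff_C_mul, term_coeff n i (by simp only [Finset.mem_range] at hi; omega)]

open Finset in
lemma sum_square (n r : ℕ) (hn : 1 ≤ n) (hr : n = r*r) :
    ∑ i ∈ Finset.range (2*n+1), (-1:ℤ)^(n+i) * (if ee n i = n then 1 else 0)
      = 2 * (-1:ℤ)^r := by
  have hr1 : 1 ≤ r := by
    rcases r with _ | r
    · norm_num at hr; omega
    · omega
  have hrn : r ≤ n := by calc r = r*1 := by ring
                            _ ≤ r*r := Nat.mul_le_mul_left r hr1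
                            _ = n := hr.symm
  have hsub : ({n-r, n+r} : Finset ℕ) ⊆ Finset.range (2*n+1) := by
    intro x hx
    simp only [Finset.mem_insert, Finset.mem_singleton] at hx
    rcases hx with rfl | rfl <;> simp only [Finset.mem_range] <;> omega
  rw [← Finset.sum_subset hsub ?_]
  · rw [Finset.sum_pair (by omega : n-r ≠ n+r)]
    have e1 : ee n (n-r) = n := by
      rw [ee_left (by omega), show n-(n-r) = r by omega, hr, pow_two]
    have e2 : ee n (n+r) = n := by
      rw [ee_right (by omega), show n+r-n = r by omega, hr, pow_two]
    rw [e1, e2, if_pos rfl,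
      neg_one_pow_eq (n+(n-r)) r (by omega), neg_one_pow_eq (n+(n+r)) r (by omega)]
    ring
  · intro x hx hnot
    simp only [Finset.mem_insert, Finset.mem_singleton, not_or] at hnot
    rw [if_neg, mul_zero]
    intro he
    rcases le_total x n with hc | hc
    · rw [ee_left hc] at he
      have : n - x = r := Nat.pow_left_injective (n := 2) (by norm_num)
        (by show (n-x)^2 = r^2; rw [he, hr, pow_two])
      exact hnot.1 (by omega)
    · rw [ee_right hc] at he
      have : x - n = r := Nat.pow_left_injective (n := 2) (by norm_num)
        (by show (x-n)^2 = r^2; rw [he, hr, pow_two])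
      exact hnot.2 (by omega)

open Finset in
lemma sum_nonsquare (n : ℕ) (h : ¬ IsSquare n) :
    ∑ i ∈ Finset.range (2*n+1), (-1:ℤ)^(n+i) * (if ee n i = n then 1 else 0) = 0 := by
  refine Finset.sum_eq_zero fun i _ => ?_
  rw [if_neg, mul_zero]
  intro he
  rcases le_total i n with hc | hc
  · rw [ee_left hc] at he
    exact h ⟨n-i, by rw [pow_two] at he; exact he.symm⟩
  · rw [ee_right hc] at he
    exact h ⟨i-n, by rw [pow_two] at he; exact he.symm⟩

open Polynomial in
lemma prod_split (n : ℕ) :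
    (∏ k ∈ Finset.range n, (1 - (X:Polynomial ℤ)^(k+1)))
      = (∏ j ∈ Finset.range ((n+1)/2), (1 - (X:Polynomial ℤ)^(2*j+1)))
        * ∏ j ∈ Finset.range (n/2), (1 - (X:Polynomial ℤ)^(2*j+2)) := by
  induction n with
  | zero => simp
  | succ n ih =>
    rw [Finset.prod_range_succ, ih]
    rcases Nat.even_or_odd n with ⟨a, ha⟩ | ⟨a, ha⟩
    · rw [show (n+1+1)/2 = a+1 by omega, show (n+1)/2 = a by omega, show n/2 = a by omega,
        Finset.prod_range_succ _ a, show n+1 = 2*a+1 by omega]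
      ring
    · rw [show (n+1+1)/2 = a+1 by omega, show (n+1)/2 = a+1 by omega, show n/2 = a by omega,
        Finset.prod_range_succ _ a, Finset.prod_range_succ _ a, show n+1 = 2*a+2 by omega]
      ring

open Polynomial Finset in
lemma Q_eq_K (n : ℕ) :
    ((∏ k ∈ Finset.range n, (1 - (X:Polynomial ℤ)^(k+1))) *
      ∏ k ∈ Finset.range n, (1 - (X:Polynomial ℤ)^(2*k+1))).coeff n
    = ((∏ j ∈ Finset.range n, (1 - (X:Polynomial ℤ)^(2*j+1)))^2
        * ∏ j ∈ Finset.range n, (1 - (X:Polynomial ℤ)^(2*j+2))).coeff n := by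
  have hodd : ∏ j ∈ Finset.range n, (1 - (X:Polynomial ℤ)^(2*j+1))
      = (∏ j ∈ Finset.range ((n+1)/2), (1 - (X:Polynomial ℤ)^(2*j+1)))
        * ∏ j ∈ Finset.range (n-(n+1)/2), (1 - (X:Polynomial ℤ)^(2*((n+1)/2+j)+1)) := by
    conv_lhs => rw [show n = (n+1)/2 + (n-(n+1)/2) by omega]
    rw [Finset.prod_range_add]
  have heven : ∏ j ∈ Finset.range n, (1 - (X:Polynomial ℤ)^(2*j+2))
      = (∏ j ∈ Finset.range (n/2), (1 - (X:Polynomial ℤ)^(2*j+2)))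
        * ∏ j ∈ Finset.range (n-n/2), (1 - (X:Polynomial ℤ)^(2*(n/2+j)+2)) := by
    conv_lhs => rw [show n = n/2 + (n-n/2) by omega]
    rw [Finset.prod_range_add]
  have hK : (∏ j ∈ Finset.range n, (1 - (X:Polynomial ℤ)^(2*j+1)))^2
        * ∏ j ∈ Finset.range n, (1 - (X:Polynomial ℤ)^(2*j+2))
      = (((∏ k ∈ Finset.range n, (1 - (X:Polynomial ℤ)^(k+1))) *
          ∏ k ∈ Finset.range n, (1 - (X:Polynomial ℤ)^(2*k+1)))
        * ∏ j ∈ Finset.range (n-(n+1)/2), (1 - (X:Polynomial ℤ)^(2*((n+1)/2+j)+1)))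
        * ∏ j ∈ Finset.range (n-n/2), (1 - (X:Polynomial ℤ)^(2*(n/2+j)+2)) := by
    rw [prod_split, hodd, heven]
    ring
  rw [hK,
    coeff_mul_prod_one_sub (Finset.range (n-n/2)) (fun j => 2*(n/2+j)+2) _ n
      (fun j _ => by show n < 2*(n/2+j)+2; omega),
    coeff_mul_prod_one_sub (Finset.range (n-(n+1)/2)) (fun j => 2*((n+1)/2+j)+1) _ n
      (fun j _ => by show n < 2*((n+1)/2+j)+1; omega)]

/-- The coefficient of `q^n` in the formal power series `(-3q;q)_∞ (q;q²)_∞`.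
Since the factors `(1 + 3q^k)` for `k > n` and `(1 - q^(2k-1))` for `2k-1 > n` do not
affect the coefficient of `q^n`, it equals the coefficient in the truncated product. -/
noncomputable def coeffProd (n : ℕ) : ℤ :=
  PowerSeries.coeff (R := ℤ) n
    ((∏ k ∈ Finset.range n, (1 + 3 * PowerSeries.X ^ (k + 1))) *
      ∏ k ∈ Finset.range n, (1 - PowerSeries.X ^ (2 * k + 1)))

open Polynomial Finset in
lemma coeffProd_eq_poly (n : ℕ) :
    coeffProd n = ((∏ k ∈ Finset.range n, (1 + 3 * (X:Polynomial ℤ)^(k+1))) *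
      ∏ k ∈ Finset.range n, (1 - (X:Polynomial ℤ)^(2*k+1))).coeff n := by
  rw [coeffProd]
  have h3 : ∀ (p : Polynomial ℤ), ((3 * p : Polynomial ℤ) : PowerSeries ℤ)
      = 3 * (p : PowerSeries ℤ) := by
    intro p
    rw [Polynomial.coe_mul]
    congr 1
    rw [← map_ofNat (Polynomial.C : ℤ →+* Polynomial ℤ) 3, Polynomial.coe_C,
      ← map_ofNat (PowerSeries.C (R := ℤ)) 3]
  have key : (((∏ k ∈ Finset.range n, (1 + 3 * (X:Polynomial ℤ)^(k+1))) *
      ∏ k ∈ Finset.range n, (1 - (X:Polynomial ℤ)^(2*k+1)) : Polynomial ℤ) : PowerSeries ℤ)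
      = (∏ k ∈ Finset.range n, (1 + 3 * PowerSeries.X ^ (k + 1))) *
        ∏ k ∈ Finset.range n, (1 - PowerSeries.X ^ (2 * k + 1)) := by
    rw [Polynomial.coe_mul]
    congr 1
    · rw [← Polynomial.coeToPowerSeries.ringHom_apply, map_prod]
      refine Finset.prod_congr rfl fun k _ => ?_
      rw [Polynomial.coeToPowerSeries.ringHom_apply, Polynomial.coe_add, Polynomial.coe_one,
        h3, Polynomial.coe_pow, Polynomial.coe_X]
    · rw [← Polynomial.coeToPowerSeries.ringHom_apply, map_prod]
      refine Finset.prod_congr rfl fun k _ => ?_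
      rw [Polynomial.coeToPowerSeries.ringHom_apply, Polynomial.coe_sub, Polynomial.coe_one,
        Polynomial.coe_pow, Polynomial.coe_X]
  rw [← key, Polynomial.coeff_coe]

open Polynomial Finset in
lemma coeffProd_mod4 (n : ℕ) :
    ((coeffProd n : ℤ) : ZMod 4)
      = ((((∏ k ∈ Finset.range n, (1 - (X:Polynomial ℤ)^(k+1))) *
          ∏ k ∈ Finset.range n, (1 - (X:Polynomial ℤ)^(2*k+1))).coeff n : ℤ) : ZMod 4) := by
  rw [coeffProd_eq_poly]
  set ρ : ℤ →+* ZMod 4 := Int.castRingHom (ZMod 4)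
  have h1 : ∀ p : Polynomial ℤ, ((p.coeff n : ℤ) : ZMod 4) = (p.map ρ).coeff n := by
    intro p; rw [Polynomial.coeff_map]; rfl
  rw [h1, h1]
  congr 1
  have hmap : ∀ p : Polynomial ℤ, p.map ρ = Polynomial.mapRingHom ρ p := fun p => rfl
  rw [hmap, hmap]
  simp only [map_mul, map_prod]
  have h3 : (3 : Polynomial (ZMod 4)) = -1 := by
    rw [← map_ofNat (Polynomial.C : ZMod 4 →+* Polynomial (ZMod 4)) 3,
      show (3 : ZMod 4) = -1 by decide, map_neg, map_one]
  have hfac : ∀ k : ℕ, (Polynomial.mapRingHom ρ) (1 + 3*(X:Polynomial ℤ)^(k+1))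
      = (Polynomial.mapRingHom ρ) (1 - (X:Polynomial ℤ)^(k+1)) := by
    intro k
    simp only [map_add, map_sub, map_one, map_mul, map_pow, map_ofNat]
    rw [h3]
    ring
  exact congrArg₂ (· * ·) (Finset.prod_congr rfl fun k _ => hfac k) rfl

theorem statement16 (n : ℕ) (hn : 1 ≤ n) :
    (IsSquare n → coeffProd n % 4 = 2) ∧
    (¬ IsSquare n → coeffProd n % 4 = 0) := by
  have hQK := Q_eq_K n
  have hmod := coeffProd_mod4 n
  constructor
  · rintro ⟨r, hrr⟩
    have hval : ((∏ k ∈ Finset.range n, (1 - (Polynomial.X:Polynomial ℤ)^(k+1))) *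
        ∏ k ∈ Finset.range n, (1 - (Polynomial.X:Polynomial ℤ)^(2*k+1))).coeff n
        = 2 * (-1:ℤ)^r := by
      rw [hQK, key_coeff, sum_square n r hn hrr]
    rw [hval] at hmod
    have h2 : ((coeffProd n : ℤ) : ZMod 4) = ((2 : ℤ) : ZMod 4) := by
      rw [hmod]
      rcases Nat.even_or_odd r with he | ho
      · rw [he.neg_one_pow]; norm_num
      · rw [ho.neg_one_pow]
        rw [ZMod.intCast_eq_intCast_iff]
        decide
    have h4 := (ZMod.intCast_eq_intCast_iff _ _ _).mp h2
    rw [Int.ModEq] at h4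
    push_cast at h4
    omega
  · intro hns
    have hval : ((∏ k ∈ Finset.range n, (1 - (Polynomial.X:Polynomial ℤ)^(k+1))) *
        ∏ k ∈ Finset.range n, (1 - (Polynomial.X:Polynomial ℤ)^(2*k+1))).coeff n = 0 := by
      rw [hQK, key_coeff, sum_nonsquare n hns]
    rw [hval] at hmod
    have h2 : ((coeffProd n : ℤ) : ZMod 4) = ((0 : ℤ) : ZMod 4) := hmod
    have h4 := (ZMod.intCast_eq_intCast_iff _ _ _).mp h2
    rw [Int.ModEq] at h4
    push_cast at h4
    omega
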